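/- Stability estimate for the backward Euler upwind scheme with residual (core of the consistency-error argument in Proposition 5.1). Let h : {1,…,N_t}×𝔾 → ℝ^d, let Γ : {1,…,N_t}×𝔾 → ℝ satisfy Γ_{n,i} ≥ 0, assume the CFL condition Σ_{ℓ=1}^d |h^ℓ_{n,i}|·(Δt/Δx) + 2dν·Δt/(Δx)² ≤ 1 for all (n,i), and let R ≥ 0. Let e : {0,…,N_t}×𝔾 → ℝ satisfy e_{N_t,i} = 0 for all i, and for every n = 1,…,N_t and i ∈ 𝔾, (1 + (Δt/(2ν))Γ_{n,i})e_{n−1,i} = (1 − Σ_ℓ|h^ℓ_{n,i}|·Δt/Δx − 2dν·Δt/(Δx)²)e_{n,i} + Σ_ℓ (h^{ℓ,+}_{n,i}·Δt/Δx + ν·Δt/(Δx)²)e_{n,i[ℓ+]} + Σ_ℓ (h^{ℓ,−}_{n,i}·Δt/Δx + ν·Δt/(Δx)²)e_{n,i[ℓ−]} − r_{n,i}Δt, where |r_{n,i}| ≤ R for all (n,i). Then max_{i∈𝔾} |e_{n,i}| ≤ (N_t − n)·R·Δt for every n ∈ {0,…,N_t}; in particular, max_{n,i} |e_{n,i}|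 ≤ TR, where T = N_tΔt. -/
import Mathlib


open Finset

/-- Shift of the `ℓ`-th coordinate of a periodic grid index by `z` (mod `N_x`). -/
def shiftIdx {d Nx : ℕ} (i : Fin d → ZMod Nx) (ℓ : Fin d) (z : ZMod Nx) : Fin d → ZMod Nx :=
  Function.update i ℓ (i ℓ + z)

/-- Stability estimate for the backward Euler upwind scheme with residual
(core of the consistency-error argument in Proposition 5.1):
`max_i |e_{n,i}| ≤ (N_t − n)·R·Δt` and in particular `max_{n,i} |e_{n,i}| ≤ T·R`. -/
theorem backward_euler_upwind_stability
    (d Nx Nt : ℕ) (hd : 0 < d) (hNx : 0 < Nx) (hNt : 0 < Nt)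
    (Δt Δx ν : ℝ) (hΔt : 0 < Δt) (hΔx : 0 < Δx) (hν : 0 < ν)
    (R : ℝ) (hR : 0 ≤ R)
    (h : ℕ → (Fin d → ZMod Nx) → Fin d → ℝ)
    (Γ : ℕ → (Fin d → ZMod Nx) → ℝ)
    (hΓ : ∀ n, 1 ≤ n → n ≤ Nt → ∀ i, 0 ≤ Γ n i)
    (hCFL : ∀ n, 1 ≤ n → n ≤ Nt → ∀ i,
      (∑ ℓ, |h n i ℓ|) * (Δt / Δx) + 2 * d * ν * Δt / Δx ^ 2 ≤ 1)
    (r : ℕ → (Fin d → ZMod Nx) → ℝ)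
    (hr : ∀ n, 1 ≤ n → n ≤ Nt → ∀ i, |r n i| ≤ R)
    (e : ℕ → (Fin d → ZMod Nx) → ℝ)
    (hterm : ∀ i, e Nt i = 0)
    (heq : ∀ n, 1 ≤ n → n ≤ Nt → ∀ i,
      (1 + Δt / (2 * ν) * Γ n i) * e (n - 1) i =
        (1 - (∑ ℓ, |h n i ℓ|) * (Δt / Δx) - 2 * d * ν * Δt / Δx ^ 2) * e n i
        + ∑ ℓ, (max (h n i ℓ) 0 * (Δt / Δx) + ν * Δt / Δx ^ 2) * e n (shiftIdx i ℓ 1)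
        + ∑ ℓ, (max (-h n i ℓ) 0 * (Δt / Δx) + ν * Δt / Δx ^ 2) * e n (shiftIdx i ℓ (-1))
        - r n i * Δt) :
    (∀ n, n ≤ Nt → ∀ i, |e n i| ≤ ((Nt : ℝ) - (n : ℝ)) * R * Δt) ∧
    (∀ n, n ≤ Nt → ∀ i, |e n i| ≤ ((Nt : ℝ) * Δt) * R) := by

  -- One-step estimate: |e (n-1) i| ≤ B + R·Δt whenever |e n ·| ≤ B.
  have key : ∀ n, 1 ≤ n → n ≤ Nt → ∀ B : ℝ, 0 ≤ B → (∀ j, |e n j| ≤ B) →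
      ∀ i, |e (n - 1) i| ≤ B + R * Δt := by
    intro n hn1 hnNt B hB hBb i
    set a := Δt / (2 * ν) * Γ n i with ha_def
    have ha : 0 ≤ a := mul_nonneg (by positivity) (hΓ n hn1 hnNt i)
    have hc0 : 0 ≤ 1 - (∑ ℓ, |h n i ℓ|) * (Δt / Δx) - 2 * d * ν * Δt / Δx ^ 2 := by
      have := hCFL n hn1 hnNt i; linarith
    have hm : 0 ≤ ν * Δt / Δx ^ 2 := by positivity
    have hle : (1 + a) * |e (n - 1) i| ≤ B + R * Δt := by
      rw [← abs_of_nonneg (show (0:ℝ) ≤ 1 + a by linarith), ← abs_mul, heq n hn1 hnNt i]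
      have t1 : |(1 - (∑ ℓ, |h n i ℓ|) * (Δt / Δx) - 2 * d * ν * Δt / Δx ^ 2) * e n i|
          ≤ (1 - (∑ ℓ, |h n i ℓ|) * (Δt / Δx) - 2 * d * ν * Δt / Δx ^ 2) * B := by
        rw [abs_mul, abs_of_nonneg hc0]
        exact mul_le_mul_of_nonneg_left (hBb i) hc0
      have t2 : |∑ ℓ, (max (h n i ℓ) 0 * (Δt / Δx) + ν * Δt / Δx ^ 2) * e n (shiftIdx i ℓ 1)|
          ≤ (∑ ℓ, (max (h n i ℓ) 0 * (Δt / Δx) + ν * Δt / Δx ^ 2)) * B := by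
        refine (Finset.abs_sum_le_sum_abs _ _).trans ?_
        rw [Finset.sum_mul]
        refine Finset.sum_le_sum fun ℓ _ => ?_
        have hc : 0 ≤ max (h n i ℓ) 0 * (Δt / Δx) + ν * Δt / Δx ^ 2 := by
          have := le_max_right (h n i ℓ) 0; positivity
        rw [abs_mul, abs_of_nonneg hc]
        exact mul_le_mul_of_nonneg_left (hBb _) hc
      have t3 : |∑ ℓ, (max (-h n i ℓ) 0 * (Δt / Δx) + ν * Δt / Δx ^ 2) * e n (shiftIdx i ℓ (-1))|
          ≤ (∑ ℓ, (max (-h n i ℓ) 0 * (Δt / Δx) + ν * Δt / Δx ^ 2)) * B := by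
        refine (Finset.abs_sum_le_sum_abs _ _).trans ?_
        rw [Finset.sum_mul]
        refine Finset.sum_le_sum fun ℓ _ => ?_
        have hc : 0 ≤ max (-h n i ℓ) 0 * (Δt / Δx) + ν * Δt / Δx ^ 2 := by
          have := le_max_right (-h n i ℓ) 0; positivity
        rw [abs_mul, abs_of_nonneg hc]
        exact mul_le_mul_of_nonneg_left (hBb _) hc
      have t4 : |r n i * Δt| ≤ R * Δt := by
        rw [abs_mul, abs_of_nonneg hΔt.le]
        exact mul_le_mul_of_nonneg_right (hr n hn1 hnNt i) hΔt.le
      have hsum : (∑ ℓ, (max (h n i ℓ) 0 * (Δt / Δx) + ν * Δt / Δx ^ 2))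
          + (∑ ℓ, (max (-h n i ℓ) 0 * (Δt / Δx) + ν * Δt / Δx ^ 2))
          = (∑ ℓ, |h n i ℓ|) * (Δt / Δx) + 2 * d * ν * Δt / Δx ^ 2 := by
        rw [← Finset.sum_add_distrib]
        have : ∀ ℓ : Fin d, (max (h n i ℓ) 0 * (Δt / Δx) + ν * Δt / Δx ^ 2)
            + (max (-h n i ℓ) 0 * (Δt / Δx) + ν * Δt / Δx ^ 2)
            = |h n i ℓ| * (Δt / Δx) + 2 * (ν * Δt / Δx ^ 2) := by
          intro ℓ
          have habs : max (h n i ℓ) 0 + max (-h n i ℓ) 0 = |h n i ℓ| := by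
            rcases le_total (h n i ℓ) 0 with hh | hh
            · rw [max_eq_right hh, max_eq_left (by linarith), abs_of_nonpos hh]; ring
            · rw [max_eq_left hh, max_eq_right (by linarith), abs_of_nonneg hh]; ring
          rw [← habs]; ring
        rw [Finset.sum_congr rfl fun ℓ _ => this ℓ, Finset.sum_add_distrib,
          ← Finset.sum_mul, Finset.sum_const, Finset.card_univ, Fintype.card_fin,
          nsmul_eq_mul]
        ring
      calc |(1 - (∑ ℓ, |h n i ℓ|) * (Δt / Δx) - 2 * d * ν * Δt / Δx ^ 2) * e n i
            + ∑ ℓ, (max (h n i ℓ) 0 * (Δt / Δx) + ν * Δt / Δx ^ 2) * e n (shiftIdx i ℓ 1)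
            + ∑ ℓ, (max (-h n i ℓ) 0 * (Δt / Δx) + ν * Δt / Δx ^ 2) * e n (shiftIdx i ℓ (-1))
            - r n i * Δt|
          ≤ |(1 - (∑ ℓ, |h n i ℓ|) * (Δt / Δx) - 2 * d * ν * Δt / Δx ^ 2) * e n i|
            + |∑ ℓ, (max (h n i ℓ) 0 * (Δt / Δx) + ν * Δt / Δx ^ 2) * e n (shiftIdx i ℓ 1)|
            + |∑ ℓ, (max (-h n i ℓ) 0 * (Δt / Δx) + ν * Δt / Δx ^ 2) * e n (shiftIdx i ℓ (-1))|
            + |r n i * Δt| := by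
            refine (abs_sub _ _).trans ?_
            gcongr
            exact (abs_add_le _ _).trans (by gcongr; exact abs_add_le _ _)
        _ ≤ (1 - (∑ ℓ, |h n i ℓ|) * (Δt / Δx) - 2 * d * ν * Δt / Δx ^ 2) * B
            + (∑ ℓ, (max (h n i ℓ) 0 * (Δt / Δx) + ν * Δt / Δx ^ 2)) * B
            + (∑ ℓ, (max (-h n i ℓ) 0 * (Δt / Δx) + ν * Δt / Δx ^ 2)) * B
            + R * Δt := add_le_add (add_le_add (add_le_add t1 t2) t3) t4
        _ = B + R * Δt := by nlinarith [hsum]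
    have h1 : |e (n - 1) i| ≤ (1 + a) * |e (n - 1) i| :=
      le_mul_of_one_le_left (abs_nonneg _) (by linarith)
    linarith
  -- Downward induction
  have main : ∀ m, m ≤ Nt → ∀ i, |e (Nt - m) i| ≤ (m : ℝ) * R * Δt := by
    intro m
    induction m with
    | zero => intro _ i; simp [hterm i]
    | succ k ih =>
      intro hk i
      have hk' : k ≤ Nt := Nat.le_of_succ_le hk
      have hn1 : 1 ≤ Nt - k := by omega
      have hnNt : Nt - k ≤ Nt := Nat.sub_le _ _
      have hstep := key (Nt - k) hn1 hnNt ((k : ℝ) * R * Δt)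
        (by positivity) (ih hk') i
      have hidx : Nt - k - 1 = Nt - (k + 1) := by omega
      rw [hidx] at hstep
      calc |e (Nt - (k + 1)) i| ≤ (k : ℝ) * R * Δt + R * Δt := hstep
        _ = ((k + 1 : ℕ) : ℝ) * R * Δt := by push_cast; ring
  constructor
  · intro n hn i
    have := main (Nt - n) (Nat.sub_le _ _) i
    rw [Nat.sub_sub_self hn] at this
    rwa [Nat.cast_sub hn] at this
  · intro n hn i
    have h1 := main (Nt - n) (Nat.sub_le _ _) i
    rw [Nat.sub_sub_self hn] at h1
    have h2 : ((Nt - n : ℕ) : ℝ) ≤ (Nt : ℝ) := by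
      exact_mod_cast Nat.sub_le _ _
    calc |e n i| ≤ ((Nt - n : ℕ) : ℝ) * R * Δt := h1
      _ ≤ (Nt : ℝ) * R * Δt := by gcongr
      _ = (Nt : ℝ) * Δt * R := by ring
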